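/- Let $a \in \R^{n\times n}$ with decreasing rearrangement $s(1)\ge\dots\ge s(n^2)$ of $(|a_{ij}|)$. Then for every $\ell \le n$, $\frac{1}{800}\cdot\frac{1}{n}\sum_{j=1}^{\ell n}s(j) \le \frac{1}{n!}\sum_{\pi\in\mathfrak{S}_n}\sum_{k=1}^{\ell}\kmax_{1\le i\le n}|a_{i\pi(i)}| \le 2\cdot\frac{1}{n}\sum_{j=1}^{\ell n}s(j)$, where $\mathfrak{S}_n$ is the symmetric group and $\kmax$ denotes the $k$-th largest value. -/

import Mathlib

namespace Stmt6aux

/-- getD at index k of a list with nonneg entries is nonneg. -/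
lemma getD_nonneg {L : List ℝ} (h0 : ∀ x ∈ L, 0 ≤ x) (k : ℕ) : 0 ≤ L.getD k 0 := by
  rcases lt_or_ge k L.length with h | h
  · rw [List.getD_eq_getElem _ _ h]; exact h0 _ (L.getElem_mem h)
  · rw [List.getD_eq_default _ _ h]

/-- getD is antitone on a desc-sorted nonneg list. -/
lemma getD_anti {L : List ℝ} (hs : L.Pairwise (fun a b : ℝ => b ≤ a))
    (h0 : ∀ x ∈ L, 0 ≤ x) {k k' : ℕ} (hkk : k ≤ k') : L.getD k' 0 ≤ L.getD k 0 := by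
  rcases lt_or_ge k' L.length with h | h
  · have hk : k < L.length := lt_of_le_of_lt hkk h
    rw [List.getD_eq_getElem _ _ h, List.getD_eq_getElem _ _ hk]
    rcases eq_or_lt_of_le hkk with rfl | hlt
    · exact le_refl _
    · exact List.pairwise_iff_getElem.mp hs k k' hk h hlt
  · rw [List.getD_eq_default _ _ h]
    exact getD_nonneg h0 k

lemma map_sum_eq {L : List ℝ} (f : ℝ → ℝ) :
    (L.map f).sum = ∑ k ∈ Finset.range L.length, f (L.getD k 0) := by
  induction L with
  | nil => simp
  | cons a t ih =>
      rw [List.map_cons, List.sum_cons, List.length_cons, Finset.sum_range_succ']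
      simp [ih, add_comm]

end Stmt6aux

namespace Stmt6aux
open Finset

noncomputable def pos (θ x : ℝ) : ℝ := max (x - θ) 0

lemma pos_nonneg (θ x : ℝ) : 0 ≤ pos θ x := le_max_right _ _

lemma le_pos (θ x : ℝ) : x ≤ θ + pos θ x := by
  rcases le_or_gt x θ with h | h
  · exact le_add_of_le_of_nonneg h (pos_nonneg _ _)
  · rw [pos, max_eq_left (by linarith)]; ring_nf; exact le_refl _

lemma pos_eq_zero {θ x : ℝ} (h : x ≤ θ) : pos θ x = 0 := by
  rw [pos, max_eq_right (by linarith)]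

/-- CORE: sum of (x-θ)_+ over a desc-sorted nonneg list, θ = m-th largest. -/
lemma core {L : List ℝ} (hs : L.Pairwise (fun a b : ℝ => b ≤ a))
    (h0 : ∀ x ∈ L, 0 ≤ x) {m : ℕ} (hm : 1 ≤ m) :
    (L.map (pos (L.getD (m-1) 0))).sum
      ≤ (∑ k ∈ Finset.range m, L.getD k 0) - m * L.getD (m-1) 0 := by
  set θ := L.getD (m-1) 0 with hθdef
  set f : ℕ → ℝ := fun k => pos θ (L.getD k 0) with hf
  have hzero : ∀ k, m ≤ k → f k = 0 := by
    intro k hk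
    exact pos_eq_zero (getD_anti hs h0 (by omega))
  have h1 : (L.map (pos θ)).sum = ∑ k ∈ Finset.range L.length, f k := map_sum_eq _
  have h2 : ∑ k ∈ Finset.range L.length, f k ≤ ∑ k ∈ Finset.range (max L.length m), f k :=
    Finset.sum_le_sum_of_subset_of_nonneg (Finset.range_subset_range.2 (le_max_left _ _))
      (fun k _ _ => pos_nonneg _ _)
  have h3 : ∑ k ∈ Finset.range (max L.length m), f k = ∑ k ∈ Finset.range m, f k :=
    (Finset.sum_subset (Finset.range_subset_range.2 (le_max_right _ _))
      (fun k _ hk => hzero k (by simpa using hk))).symm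
  have h4 : ∑ k ∈ Finset.range m, f k = ∑ k ∈ Finset.range m, (L.getD k 0 - θ) := by
    refine Finset.sum_congr rfl (fun k hk => ?_)
    have hk' : L.getD (m-1) 0 ≤ L.getD k 0 :=
      getD_anti hs h0 (by simp at hk; omega)
    rw [hf]; simp only [pos]
    rw [← hθdef] at hk'
    rw [max_eq_left (by linarith)]
  rw [h1, Finset.sum_sub_distrib, Finset.sum_const, Finset.card_range, nsmul_eq_mul] at *
  rw [h4] at h3
  linarith

/-- prefix sums bounded via threshold. -/
lemma prefix_le {L : List ℝ} {θ : ℝ} (hθ : 0 ≤ θ) (ℓ : ℕ) :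
    ∑ k ∈ Finset.range ℓ, L.getD k 0 ≤ ℓ * θ + (L.map (pos θ)).sum := by
  have h1 : ∑ k ∈ Finset.range ℓ, L.getD k 0
      ≤ ∑ k ∈ Finset.range ℓ, (θ + pos θ (L.getD k 0)) :=
    Finset.sum_le_sum (fun k _ => le_pos _ _)
  have h2 : ∑ k ∈ Finset.range ℓ, pos θ (L.getD k 0)
      ≤ ∑ k ∈ Finset.range (max ℓ L.length), pos θ (L.getD k 0) :=
    Finset.sum_le_sum_of_subset_of_nonneg (Finset.range_subset_range.2 (le_max_left _ _))
      (fun k _ _ => pos_nonneg _ _)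
  have h3 : ∑ k ∈ Finset.range (max ℓ L.length), pos θ (L.getD k 0)
      = ∑ k ∈ Finset.range L.length, pos θ (L.getD k 0) := by
    refine (Finset.sum_subset (Finset.range_subset_range.2 (le_max_right _ _)) ?_).symm
    intro k _ hk
    rw [List.getD_eq_default _ _ (by simpa using hk)]
    exact pos_eq_zero hθ
  rw [Finset.sum_add_distrib, Finset.sum_const, Finset.card_range, nsmul_eq_mul] at h1
  rw [map_sum_eq]
  linarith

end Stmt6aux

namespace Stmt6aux

lemma merge_sorted (l : List ℝ) :
    (l.mergeSort (fun a b => decide (b ≤ a))).Pairwise (fun a b : ℝ => b ≤ a) := by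
  have := List.pairwise_mergeSort (le := fun a b : ℝ => decide (b ≤ a))
    (fun a b c h1 h2 => by simp at *; linarith)
    (fun a b => by simpa using le_total b a) l
  simpa using this

lemma merge_nonneg {l : List ℝ} (h0 : ∀ x ∈ l, 0 ≤ x) :
    ∀ x ∈ l.mergeSort (fun a b => decide (b ≤ a)), 0 ≤ x := by
  intro x hx
  exact h0 x ((List.mergeSort_perm l _).mem_iff.mp hx)

lemma take_sum {L : List ℝ} {m : ℕ} (h : m ≤ L.length) :
    (L.take m).sum = ∑ k ∈ Finset.range m, L.getD k 0 := by
  have h1 := map_sum_eq (L := L.take m) id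
  rw [List.map_id] at h1
  rw [h1, List.length_take, min_eq_left h]
  refine Finset.sum_congr rfl (fun k hk => ?_)
  simp at hk
  rw [List.getD_eq_getElem _ _ (by rw [List.length_take]; omega),
      List.getD_eq_getElem _ _ (by omega)]
  simp [List.getElem_take]

/-- monotone average: m'' ≤ m implies m'' * topsum m ≤ m * topsum m''. -/
lemma mono_sum {L : List ℝ} (hs : L.Pairwise (fun a b : ℝ => b ≤ a))
    (h0 : ∀ x ∈ L, 0 ≤ x) {m' m : ℕ} (h : m' ≤ m) :
    (m' : ℝ) * ∑ k ∈ Finset.range m, L.getD k 0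
      ≤ (m : ℝ) * ∑ k ∈ Finset.range m', L.getD k 0 := by
  have hsplit : ∑ k ∈ Finset.range m, L.getD k 0
      = ∑ k ∈ Finset.range m', L.getD k 0 + ∑ k ∈ Finset.Ico m' m, L.getD k 0 := by
    rw [← Finset.sum_range_add_sum_Ico _ h]
  have hterm : ∀ k ∈ Finset.Ico m' m,
      (m' : ℝ) * L.getD k 0 ≤ ∑ j ∈ Finset.range m', L.getD j 0 := by
    intro k hk
    simp only [Finset.mem_Ico] at hk
    calc (m' : ℝ) * L.getD k 0 = ∑ _j ∈ Finset.range m', L.getD k 0 := by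
          rw [Finset.sum_const, Finset.card_range, nsmul_eq_mul]
      _ ≤ ∑ j ∈ Finset.range m', L.getD j 0 :=
          Finset.sum_le_sum (fun j hj => getD_anti hs h0 (by simp at hj; omega))
  have htail : (m' : ℝ) * ∑ k ∈ Finset.Ico m' m, L.getD k 0
      ≤ ((m : ℝ) - m') * ∑ k ∈ Finset.range m', L.getD k 0 := by
    rw [Finset.mul_sum]
    calc ∑ k ∈ Finset.Ico m' m, (m' : ℝ) * L.getD k 0
        ≤ ∑ _k ∈ Finset.Ico m' m, ∑ j ∈ Finset.range m', L.getD j 0 :=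
          Finset.sum_le_sum hterm
      _ = ((m : ℝ) - m') * ∑ k ∈ Finset.range m', L.getD k 0 := by
          rw [Finset.sum_const, Nat.card_Ico, nsmul_eq_mul, Nat.cast_sub h]
  have h0' : 0 ≤ ∑ k ∈ Finset.range m', L.getD k 0 :=
    Finset.sum_nonneg (fun k _ => getD_nonneg h0 k)
  nlinarith [htail, hsplit]

/-- any ≤ m coordinates of a nonneg vector sum to at most the top-m sum. -/
lemma sub_le {ι : Type*} [Fintype ι] [DecidableEq ι] (x : ι → ℝ) (h0 : ∀ i, 0 ≤ x i)
    {l : List ℝ} (hp : l.Perm ((Finset.univ : Finset ι).toList.map x))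
    (s : Finset ι) {m : ℕ} (hcard : s.card ≤ m) :
    ∑ i ∈ s, x i ≤ ∑ k ∈ Finset.range m,
      (l.mergeSort (fun a b => decide (b ≤ a))).getD k 0 := by
  rcases Nat.eq_zero_or_pos m with rfl | hm
  · have : s = ∅ := Finset.card_eq_zero.mp (le_antisymm hcard (Nat.zero_le _))
    simp [this]
  set L := l.mergeSort (fun a b => decide (b ≤ a)) with hL
  have h0l : ∀ y ∈ l, 0 ≤ y := by
    intro y hy
    rcases List.mem_map.mp (hp.mem_iff.mp hy) with ⟨i, _, rfl⟩
    exact h0 i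
  have h0L : ∀ y ∈ L, 0 ≤ y := merge_nonneg h0l
  have hsL : L.Pairwise (fun a b : ℝ => b ≤ a) := merge_sorted l
  set θ := L.getD (m-1) 0 with hθ
  have hθ0 : 0 ≤ θ := getD_nonneg h0L _
  have h1 : ∑ i ∈ s, x i ≤ ∑ i ∈ s, (θ + pos θ (x i)) :=
    Finset.sum_le_sum (fun i _ => le_pos _ _)
  have h2 : ∑ i ∈ s, pos θ (x i) ≤ ∑ i ∈ Finset.univ, pos θ (x i) :=
    Finset.sum_le_sum_of_subset_of_nonneg (Finset.subset_univ s)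
      (fun i _ _ => pos_nonneg _ _)
  have h3 : ∑ i ∈ Finset.univ, pos θ (x i) = (L.map (pos θ)).sum := by
    have hperm : (L.map (pos θ)).Perm ((Finset.univ : Finset ι).toList.map (pos θ ∘ x)) := by
      rw [← List.map_map]
      exact ((List.mergeSort_perm l _).trans hp).map _
    rw [hperm.sum_eq, Finset.sum_map_toList]
    rfl
  have h4 := core hsL h0L hm
  rw [Finset.sum_add_distrib, Finset.sum_const, nsmul_eq_mul] at h1
  have hc : (s.card : ℝ) ≤ m := Nat.cast_le.mpr hcard
  calc ∑ i ∈ s, x i ≤ s.card * θ + ∑ i ∈ s, pos θ (x i) := h1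
    _ ≤ m * θ + (L.map (pos θ)).sum := by
        rw [h3] at h2
        have := mul_le_mul_of_nonneg_right hc hθ0
        linarith
    _ ≤ m * θ + ((∑ k ∈ Finset.range m, L.getD k 0) - m * θ) := by
        rw [← hθ] at h4
        linarith
    _ = ∑ k ∈ Finset.range m, L.getD k 0 := by ring

end Stmt6aux

namespace Stmt6aux
open Finset Equiv

variable {n : ℕ}

def fiber (i j : Fin n) : Finset (Perm (Fin n)) :=
  Finset.univ.filter (fun π => π i = j)

def fiber2 (i i' j j' : Fin n) : Finset (Perm (Fin n)) :=
  Finset.univ.filter (fun π => π i = j ∧ π i' = j')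

@[simp] lemma mem_fiber {i j : Fin n} {π : Perm (Fin n)} :
    π ∈ fiber i j ↔ π i = j := by simp [fiber]

@[simp] lemma mem_fiber2 {i i' j j' : Fin n} {π : Perm (Fin n)} :
    π ∈ fiber2 i i' j j' ↔ π i = j ∧ π i' = j' := by simp [fiber2]

lemma card_fiber_eq (i i' j j' : Fin n) : (fiber i j).card = (fiber i' j').card := by
  have step1 : ∀ (i j j' : Fin n), (fiber i j).card = (fiber i j').card := by
    intro i j j'
    refine Finset.card_bij' (fun π _ => (Equiv.swap j j') * π)
      (fun π _ => (Equiv.swap j j') * π) ?_ ?_ ?_ ?_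
    · intro π hπ
      rw [mem_fiber] at *
      simp [hπ]
    · intro π hπ
      rw [mem_fiber] at *
      simp [hπ, Equiv.swap_apply_right]
    · intro π _; simp [← mul_assoc]
    · intro π _; simp [← mul_assoc]
  have step2 : ∀ (i i' j : Fin n), (fiber i j).card = (fiber i' j).card := by
    intro i i' j
    refine Finset.card_bij' (fun π _ => π * (Equiv.swap i i'))
      (fun π _ => π * (Equiv.swap i i')) ?_ ?_ ?_ ?_
    · intro π hπ
      rw [mem_fiber] at *
      simp [Equiv.swap_apply_right, hπ]
    · intro π hπ
      rw [mem_fiber] at *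
      simp [Equiv.swap_apply_right, hπ]
    · intro π _; simp [mul_assoc]
    · intro π _; simp [mul_assoc]
  rw [step1 i j j', step2 i i' j']

lemma n_mul_card_fiber (i j : Fin n) : n * (fiber i j).card = n.factorial := by
  have h := Finset.card_eq_sum_card_fiberwise
    (f := fun π : Perm (Fin n) => π i) (s := Finset.univ) (t := Finset.univ)
    (fun π _ => Finset.mem_univ _)
  have h2 : ∀ j' : Fin n,
      (Finset.univ.filter (fun π : Perm (Fin n) => π i = j')).card = (fiber i j).card := by
    intro j'; exact card_fiber_eq i i j' j
  rw [Finset.sum_congr rfl (fun j' _ => h2 j')] at h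
  simp only [Finset.sum_const, smul_eq_mul, Finset.card_univ, Fintype.card_fin] at h
  rw [← h, Fintype.card_perm, Fintype.card_fin]

lemma exists_pair_perm {α : Type*} [DecidableEq α] {j j' k k' : α}
    (h1 : j ≠ j') (h2 : k ≠ k') : ∃ σ : Perm α, σ j = k ∧ σ j' = k' := by
  set b := Equiv.swap j k j' with hb
  have hbk : b ≠ k := by
    rw [hb]
    intro h
    exact h1 (Equiv.injective _ (h.trans (Equiv.swap_apply_left j k).symm)).symm
  refine ⟨(Equiv.swap b k') * (Equiv.swap j k), ?_, ?_⟩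
  · simp only [Equiv.Perm.mul_apply, Equiv.swap_apply_left]
    rw [Equiv.swap_apply_of_ne_of_ne (Ne.symm hbk) h2]
  · simp only [Equiv.Perm.mul_apply, ← hb, Equiv.swap_apply_left]

lemma card_fiber2_eq (i i' : Fin n) {j j' k k' : Fin n} (hj : j ≠ j') (hk : k ≠ k') :
    (fiber2 i i' j j').card = (fiber2 i i' k k').card := by
  obtain ⟨σ, hσ1, hσ2⟩ := exists_pair_perm hj hk
  refine Finset.card_bij' (fun π _ => σ * π) (fun π _ => σ⁻¹ * π) ?_ ?_ ?_ ?_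
  · intro π hπ
    rw [mem_fiber2] at *
    simp [Equiv.Perm.mul_apply, hπ.1, hπ.2, hσ1, hσ2]
  · intro π hπ
    rw [mem_fiber2] at *
    constructor
    · rw [Equiv.Perm.mul_apply, hπ.1, ← hσ1]; simp
    · rw [Equiv.Perm.mul_apply, hπ.2, ← hσ2]; simp
  · intro π _; simp [← mul_assoc]
  · intro π _; simp [← mul_assoc]

lemma card_fiber2_mul {i i' j j' : Fin n} (hi : i ≠ i') (hj : j ≠ j') :
    (n - 1) * (fiber2 i i' j j').card = (fiber i j).card := by
  have h := Finset.card_eq_sum_card_fiberwise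
    (f := fun π : Perm (Fin n) => π i') (s := fiber i j) (t := Finset.univ)
    (fun π _ => Finset.mem_univ _)
  have hsplit : ∀ j'' : Fin n,
      ((fiber i j).filter (fun π => π i' = j'')).card
        = if j'' = j then 0 else (fiber2 i i' j j').card := by
    intro j''
    by_cases hcase : j'' = j
    · subst hcase
      rw [if_pos rfl, Finset.card_eq_zero]
      ext π
      simp only [fiber, Finset.filter_filter, Finset.mem_filter, Finset.mem_univ, true_and,
        Finset.notMem_empty, iff_false, not_and]
      intro h1 h2
      exact hi (Equiv.injective π (h1.trans h2.symm))
    · rw [if_neg hcase]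
      have heq : (fiber i j).filter (fun π => π i' = j'') = fiber2 i i' j j'' := by
        simp [fiber, fiber2, Finset.filter_filter]
      rw [heq]
      exact card_fiber2_eq i i' (Ne.symm hcase) hj
  rw [Finset.sum_congr rfl (fun j'' _ => hsplit j'')] at h
  rw [Finset.sum_ite, Finset.sum_const, Finset.sum_const, smul_eq_mul, smul_eq_mul,
    mul_zero, zero_add] at h
  have hcard : (Finset.univ.filter (fun j'' : Fin n => ¬ j'' = j)).card = n - 1 := by
    have : (Finset.univ.filter (fun j'' : Fin n => ¬ j'' = j)) = Finset.univ.erase j := by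
      ext y; simp [Finset.mem_erase, and_comm]
    rw [this, Finset.card_erase_of_mem (Finset.mem_univ _), Finset.card_univ, Fintype.card_fin]
  rw [hcard] at h
  exact h.symm

end Stmt6aux

namespace Stmt6aux
open Finset Equiv

lemma perm_ofFn_univ {n : ℕ} (x : Fin n → ℝ) :
    (List.ofFn x).Perm ((Finset.univ : Finset (Fin n)).toList.map x) := by
  rw [List.ofFn_eq_map]
  refine List.Perm.map x ?_
  refine (List.perm_ext_iff_of_nodup (List.nodup_finRange n) (Finset.nodup_toList _)).mpr ?_
  intro i; simp

/-- at least half of the fiber at `p ∈ TF` has at most `ℓ` hits in `TF`. -/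
lemma good_half {n ℓ : ℕ} (hℓ1 : 1 ≤ ℓ) (TF : Finset (Fin n × Fin n))
    (hb : 2 * (TF.card - 1) ≤ ℓ * (n - 1)) (hcase : 2 ≤ n ∨ TF.card ≤ 1)
    {p : Fin n × Fin n} (hp : p ∈ TF) :
    (fiber p.1 p.2).card ≤ 2 * ((fiber p.1 p.2).filter
      (fun π => ((TF.filter (fun q => π q.1 = q.2)).card ≤ ℓ))).card := by
  classical
  set N : Perm (Fin n) → ℕ := fun π => (TF.filter (fun q => π q.1 = q.2)).card with hN
  set c := (fiber p.1 p.2).card with hc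
  set good := (fiber p.1 p.2).filter (fun π => N π ≤ ℓ) with hgood
  set bad := (fiber p.1 p.2).filter (fun π => ¬ N π ≤ ℓ) with hbad
  have hgb : good.card + bad.card = c := Finset.card_filter_add_card_filter_not _
  suffices h2b : 2 * bad.card ≤ c by omega
  set cnt : Fin n × Fin n → ℕ :=
    fun q => ((fiber p.1 p.2).filter (fun π => π q.1 = q.2)).card with hcnt
  -- total hit count over the fiber
  have hsumN : ∑ π ∈ fiber p.1 p.2, N π = c + ∑ q ∈ TF.erase p, cnt q := by
    have h1 : ∀ π ∈ fiber p.1 p.2, N π = ∑ q ∈ TF, if π q.1 = q.2 then 1 else 0 := by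
      intro π _
      exact Finset.card_filter _ _
    rw [Finset.sum_congr rfl h1, Finset.sum_comm]
    have h2 : ∀ q : Fin n × Fin n,
        ∑ π ∈ fiber p.1 p.2, (if π q.1 = q.2 then 1 else 0) = cnt q := by
      intro q
      exact (Finset.card_filter _ _).symm
    rw [Finset.sum_congr rfl (fun q _ => h2 q)]
    have h3 : cnt p = c := by
      rw [hc]
      show ((fiber p.1 p.2).filter (fun π => π p.1 = p.2)).card = (fiber p.1 p.2).card
      congr 1
      refine Finset.filter_true_of_mem ?_
      intro π hπ
      exact (mem_fiber.mp hπ)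
    rw [← Finset.add_sum_erase _ cnt hp, h3]
  have hNge1 : ∀ π ∈ fiber p.1 p.2, 1 ≤ N π := by
    intro π hπ
    refine Finset.card_pos.mpr ⟨p, Finset.mem_filter.mpr ⟨hp, mem_fiber.mp hπ⟩⟩
  -- Markov
  have hmarkov : ℓ * bad.card ≤ ∑ q ∈ TF.erase p, cnt q := by
    have h1 : ∑ π ∈ fiber p.1 p.2, (N π - 1) = ∑ q ∈ TF.erase p, cnt q := by
      have h2 : ∑ π ∈ fiber p.1 p.2, (N π - 1) + c = ∑ π ∈ fiber p.1 p.2, N π := by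
        rw [hc, Finset.card_eq_sum_ones (fiber p.1 p.2), ← Finset.sum_add_distrib]
        refine Finset.sum_congr rfl (fun π hπ => ?_)
        have := hNge1 π hπ
        omega
      omega
    calc ℓ * bad.card = ∑ _π ∈ bad, ℓ := by rw [Finset.sum_const, smul_eq_mul, mul_comm]
      _ ≤ ∑ π ∈ bad, (N π - 1) := by
          refine Finset.sum_le_sum (fun π hπ => ?_)
          have := (Finset.mem_filter.mp hπ).2
          omega
      _ ≤ ∑ π ∈ fiber p.1 p.2, (N π - 1) :=
          Finset.sum_le_sum_of_subset (Finset.filter_subset _ _)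
      _ = ∑ q ∈ TF.erase p, cnt q := h1
  have hcntle : ∀ q ∈ TF.erase p, (n - 1) * cnt q ≤ c := by
    intro q hq
    obtain ⟨hqne, hqTF⟩ := Finset.mem_erase.mp hq
    by_cases h1 : q.1 = p.1
    · have h2 : q.2 ≠ p.2 := fun h2 => hqne (Prod.ext h1 h2)
      have : cnt q = 0 := by
        show ((fiber p.1 p.2).filter (fun π => π q.1 = q.2)).card = 0
        rw [Finset.card_eq_zero]
        ext π
        simp only [Finset.mem_filter, mem_fiber, Finset.notMem_empty, iff_false, not_and]
        intro hπ1 hπ2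
        rw [h1] at hπ2
        exact h2 (hπ2.symm.trans hπ1)
      rw [this, mul_zero]
      exact Nat.zero_le _
    · by_cases h2 : q.2 = p.2
      · have : cnt q = 0 := by
          rw [hcnt, Finset.card_eq_zero]
          ext π
          simp only [Finset.mem_filter, mem_fiber, Finset.notMem_empty, iff_false, not_and]
          intro hπ1 hπ2
          rw [h2] at hπ2
          exact h1 (π.injective (hπ2.trans hπ1.symm))
        rw [this, mul_zero]
        exact Nat.zero_le _
      · have heq : (fiber p.1 p.2).filter (fun π => π q.1 = q.2)
            = fiber2 p.1 q.1 p.2 q.2 := by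
          ext π
          simp [fiber, fiber2, Finset.filter_filter, and_comm]
        show (n-1) * ((fiber p.1 p.2).filter (fun π => π q.1 = q.2)).card ≤ c
        rw [heq, hc]
        exact le_of_eq (card_fiber2_mul (fun h => h1 h.symm) (fun h => h2 h.symm))
  rcases hcase with hn2 | hTF1
  · -- n ≥ 2
    have hE : (n - 1) * ∑ q ∈ TF.erase p, cnt q ≤ (TF.card - 1) * c := by
      rw [Finset.mul_sum]
      calc ∑ q ∈ TF.erase p, (n - 1) * cnt q ≤ ∑ _q ∈ TF.erase p, c :=
            Finset.sum_le_sum hcntle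
        _ = (TF.card - 1) * c := by
            rw [Finset.sum_const, smul_eq_mul, Finset.card_erase_of_mem hp]
    have hkey : (n - 1) * (ℓ * bad.card) ≤ (TF.card - 1) * c :=
      le_trans (Nat.mul_le_mul_left _ hmarkov) hE
    -- 2 * bad ≤ c by cancellation
    have hpos : 0 < ℓ * (n - 1) := Nat.mul_pos hℓ1 (by omega)
    refine Nat.le_of_mul_le_mul_left ?_ hpos
    calc ℓ * (n - 1) * (2 * bad.card) = 2 * ((TF.card - 1) * c)
          - 2 * ((TF.card -1) * c) + ℓ * (n-1) * (2 * bad.card) := by omega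
      _ ≤ ℓ * (n - 1) * c := by
          have h3 : ℓ * (n - 1) * (2 * bad.card) = 2 * ((n - 1) * (ℓ * bad.card)) := by ring
          have h4 : 2 * ((n - 1) * (ℓ * bad.card)) ≤ 2 * ((TF.card - 1) * c) :=
            Nat.mul_le_mul_left _ hkey
          have h5 : 2 * ((TF.card - 1) * c) = (2 * (TF.card - 1)) * c := by ring
          have h6 : (2 * (TF.card - 1)) * c ≤ ℓ * (n - 1) * c :=
            Nat.mul_le_mul_right _ hb
          omega
  · -- TF.card ≤ 1 : the erase set is empty
    have hcard0 : (TF.erase p).card = 0 := by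
      have := Finset.card_erase_of_mem hp
      omega
    have : TF.erase p = ∅ := Finset.card_eq_zero.mp hcard0
    rw [this] at hmarkov
    simp only [Finset.sum_empty, Nat.le_zero, Nat.mul_eq_zero] at hmarkov
    rcases hmarkov with h | h
    · omega
    · omega

end Stmt6aux

/-- `kmax x k` is the `k`-th largest entry (1-indexed) of the vector `x`. -/
noncomputable def kmax {n : ℕ} (x : Fin n → ℝ) (k : ℕ) : ℝ :=
  ((List.ofFn x).mergeSort (fun a b => decide (b ≤ a))).getD (k - 1) 0

/-- `smat a k` is the `k`-th largest entry (1-indexed) of `(|a i j|)`. -/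
noncomputable def smat {n N : ℕ} (a : Fin n → Fin N → ℝ) (k : ℕ) : ℝ :=
  (((Finset.univ : Finset (Fin n × Fin N)).toList.map
      (fun p => |a p.1 p.2|)).mergeSort (fun a b => decide (b ≤ a))).getD (k - 1) 0

set_option maxHeartbeats 1000000 in
open Stmt6aux Finset Equiv in
/-- Example 1: the main theorem for `G = 𝔖_n`, the symmetric group. -/
theorem stmt6 (n ℓ : ℕ) (hℓ : ℓ ≤ n) (a : Fin n → Fin n → ℝ) :
    (1 / 800) * ((1 / n) * ∑ j ∈ Finset.range (ℓ * n), smat a (j + 1))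
      ≤ (∑ π : Equiv.Perm (Fin n),
          ∑ k ∈ Finset.range ℓ, kmax (fun i => |a i (π i)|) (k + 1)) / (n.factorial : ℝ) ∧
    (∑ π : Equiv.Perm (Fin n),
          ∑ k ∈ Finset.range ℓ, kmax (fun i => |a i (π i)|) (k + 1)) / (n.factorial : ℝ)
      ≤ 2 * ((1 / n) * ∑ j ∈ Finset.range (ℓ * n), smat a (j + 1)) := by
  classical
  rcases Nat.eq_zero_or_pos ℓ with rfl | hℓ1
  · simp
  have hn0 : 0 < n := lt_of_lt_of_le hℓ1 hℓ
  set m := ℓ * n with hm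
  have hm1 : 1 ≤ m := Nat.mul_pos hℓ1 hn0
  have hmn2 : m ≤ n * n := Nat.mul_le_mul_right n hℓ
  set f : Fin n × Fin n → ℝ := fun p => |a p.1 p.2| with hf
  set l0 : List ℝ := ((Finset.univ : Finset (Fin n × Fin n)).toList.map f) with hl0
  set G : List ℝ := l0.mergeSort (fun a b => decide (b ≤ a)) with hG
  have hGlen : G.length = n * n := by
    rw [hG, List.length_mergeSort, hl0, List.length_map, Finset.length_toList,
      Finset.card_univ]
    simp
  have h0l0 : ∀ y ∈ l0, 0 ≤ y := by
    intro y hy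
    rcases List.mem_map.mp hy with ⟨p, _, rfl⟩
    exact abs_nonneg _
  have h0G : ∀ y ∈ G, 0 ≤ y := merge_nonneg h0l0
  have hsG : G.Pairwise (fun a b : ℝ => b ≤ a) := merge_sorted l0
  have hsmat : ∀ j : ℕ, smat a (j + 1) = G.getD j 0 := by
    intro j
    simp only [smat, Nat.add_sub_cancel]
    rfl
  have hkmax : ∀ (x : Fin n → ℝ) (k : ℕ), kmax x (k + 1)
      = ((List.ofFn x).mergeSort (fun a b => decide (b ≤ a))).getD k 0 := by
    intro x k
    simp only [kmax, Nat.add_sub_cancel]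
  set W : ℝ := ∑ k ∈ Finset.range m, G.getD k 0 with hW
  have hWsmat : ∑ j ∈ Finset.range m, smat a (j + 1) = W :=
    Finset.sum_congr rfl (fun j _ => hsmat j)
  have hW0 : 0 ≤ W := Finset.sum_nonneg (fun k _ => getD_nonneg h0G k)
  -- the fiber cardinality
  set i0 : Fin n := ⟨0, hn0⟩ with hi0
  set c := (fiber i0 i0).card with hc
  have hcfib : ∀ i j : Fin n, (fiber i j).card = c := fun i j => card_fiber_eq i i0 j i0
  have hnc : n * c = n.factorial := by rw [hc]; exact n_mul_card_fiber i0 i0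
  have hfactR : ((n.factorial : ℕ) : ℝ) = (n : ℝ) * (c : ℝ) := by
    rw [← hnc]; push_cast; ring
  have hfactpos : (0 : ℝ) < (n.factorial : ℝ) := by positivity
  have hnR : (0:ℝ) < (n : ℝ) := by positivity
  set S : ℝ := ∑ π : Equiv.Perm (Fin n),
      ∑ k ∈ Finset.range ℓ, kmax (fun i => |a i (π i)|) (k + 1) with hS
  -- nonnegativity of each π's term
  have hperm_nonneg : ∀ π : Equiv.Perm (Fin n), ∀ y ∈
      (List.ofFn (fun i => |a i (π i)|)).mergeSort (fun a b => decide (b ≤ a)), 0 ≤ y := by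
    intro π
    refine merge_nonneg ?_
    intro y hy
    rcases List.mem_ofFn.mp hy with ⟨i, rfl⟩
    exact abs_nonneg _
  have ht0 : ∀ π : Equiv.Perm (Fin n),
      0 ≤ ∑ k ∈ Finset.range ℓ, kmax (fun i => |a i (π i)|) (k + 1) := by
    intro π
    refine Finset.sum_nonneg (fun k _ => ?_)
    rw [hkmax]
    exact getD_nonneg (hperm_nonneg π) k
  have hS0 : 0 ≤ S := Finset.sum_nonneg (fun π _ => ht0 π)
  -- ==================== UPPER BOUND ====================
  have upper : S ≤ (c : ℝ) * W := by
    set θ : ℝ := G.getD (m - 1) 0 with hθ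
    have hθ0 : 0 ≤ θ := getD_nonneg h0G _
    have hper : ∀ π : Equiv.Perm (Fin n),
        ∑ k ∈ Finset.range ℓ, kmax (fun i => |a i (π i)|) (k + 1)
          ≤ ℓ * θ + ∑ i : Fin n, pos θ |a i (π i)| := by
      intro π
      set L := (List.ofFn (fun i => |a i (π i)|)).mergeSort
        (fun a b => decide (b ≤ a)) with hL
      have h1 : ∑ k ∈ Finset.range ℓ, kmax (fun i => |a i (π i)|) (k + 1)
          = ∑ k ∈ Finset.range ℓ, L.getD k 0 :=
        Finset.sum_congr rfl (fun k _ => hkmax _ k)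
      have h2 := prefix_le (L := L) hθ0 ℓ
      have h3 : (L.map (pos θ)).sum = ∑ i : Fin n, pos θ |a i (π i)| := by
        have hp : (L.map (pos θ)).Perm ((List.ofFn (fun i => |a i (π i)|)).map (pos θ)) :=
          (List.mergeSort_perm _ _).map _
        rw [hp.sum_eq, List.map_ofFn, List.sum_ofFn]
        rfl
      rw [h1, ← h3]
      exact h2
    have hsum1 : S ≤ ∑ π : Equiv.Perm (Fin n), (ℓ * θ + ∑ i : Fin n, pos θ |a i (π i)|) :=
      Finset.sum_le_sum (fun π _ => hper π)
    have hswap : ∑ π : Equiv.Perm (Fin n), ∑ i : Fin n, pos θ |a i (π i)|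
        = (c : ℝ) * ∑ p : Fin n × Fin n, pos θ (f p) := by
      rw [Finset.sum_comm]
      have hin : ∀ i : Fin n, ∑ π : Equiv.Perm (Fin n), pos θ |a i (π i)|
          = ∑ j : Fin n, (c : ℝ) * pos θ |a i j| := by
        intro i
        rw [← Finset.sum_fiberwise (Finset.univ) (fun π : Equiv.Perm (Fin n) => π i)
          (fun π => pos θ |a i (π i)|)]
        refine Finset.sum_congr rfl (fun j _ => ?_)
        have : ∀ π ∈ Finset.univ.filter (fun π : Equiv.Perm (Fin n) => π i = j),
            pos θ |a i (π i)| = pos θ |a i j| := by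
          intro π hπ
          rw [(Finset.mem_filter.mp hπ).2]
        rw [Finset.sum_congr rfl this, Finset.sum_const, nsmul_eq_mul]
        congr 1
        exact congrArg _ (hcfib i j)
      rw [Finset.sum_congr rfl (fun i _ => hin i), Fintype.sum_prod_type, Finset.mul_sum]
      refine Finset.sum_congr rfl (fun i _ => ?_)
      rw [Finset.mul_sum]
    have hGsum : ∑ p : Fin n × Fin n, pos θ (f p) = (G.map (pos θ)).sum := by
      have hp : (G.map (pos θ)).Perm ((Finset.univ : Finset (Fin n × Fin n)).toList.map
          (pos θ ∘ f)) := by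
        have : (G.map (pos θ)).Perm (l0.map (pos θ)) := (List.mergeSort_perm _ _).map _
        rw [hl0, List.map_map] at this
        exact this
      rw [hp.sum_eq, Finset.sum_map_toList]
      rfl
    have hcore := core hsG h0G hm1
    rw [← hθ, ← hW] at hcore
    have hcard : ∑ _π : Equiv.Perm (Fin n), (ℓ * θ : ℝ) = (n.factorial : ℝ) * (ℓ * θ) := by
      rw [Finset.sum_const, nsmul_eq_mul, Finset.card_univ, Fintype.card_perm,
        Fintype.card_fin]
    rw [Finset.sum_add_distrib, hcard, hswap, hGsum] at hsum1
    have hc0 : (0:ℝ) ≤ c := Nat.cast_nonneg c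
    have hmR : ((m:ℕ):ℝ) = (ℓ : ℝ) * n := by rw [hm]; push_cast; ring
    calc S ≤ (n.factorial : ℝ) * (ℓ * θ) + (c:ℝ) * (G.map (pos θ)).sum := hsum1
      _ ≤ (n.factorial : ℝ) * (ℓ * θ) + (c:ℝ) * (W - m * θ) := by nlinarith [hcore]
      _ = (c : ℝ) * W := by rw [hfactR, hmR]; ring
  -- ==================== LOWER BOUND ====================
  have lower : (c : ℝ) * W ≤ 200 * S := by
    set m'' := (m + 99) / 100 with hm''def
    have hm''1 : 1 ≤ m'' := by omega
    have hm''m : m'' ≤ m := by omega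
    have h100 : m ≤ 100 * m'' := by omega
    -- the sorted list of positions
    set P : List (Fin n × Fin n) := ((Finset.univ : Finset (Fin n × Fin n)).toList).mergeSort
      (fun p q => decide (f q ≤ f p)) with hP
    have hPperm : P.Perm (Finset.univ : Finset (Fin n × Fin n)).toList :=
      List.mergeSort_perm _ _
    have hPnodup : P.Nodup := hPperm.nodup_iff.mpr (Finset.nodup_toList _)
    have hPlen : P.length = n * n := by
      rw [hP, List.length_mergeSort, Finset.length_toList, Finset.card_univ]
      simp
    have hPmapG : P.map f = G := by
      haveI : IsAntisymm ℝ (fun a b : ℝ => b ≤ a) := ⟨fun a b h1 h2 => le_antisymm h2 h1⟩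
      refine (fun hp hs => List.Perm.eq_of_pairwise (le := fun a b : ℝ => b ≤ a)
        (fun a b _ _ h1 h2 => le_antisymm h2 h1) hs hsG hp) ?_ ?_
      · exact (hPperm.map f).trans ((List.mergeSort_perm l0 _).symm)
      · have hs := List.pairwise_mergeSort (le := fun p q : Fin n × Fin n => decide (f q ≤ f p))
          (fun p q r h1 h2 => by simp at *; linarith)
          (fun p q => by simpa using le_total (f q) (f p))
          ((Finset.univ : Finset (Fin n × Fin n)).toList)
        rw [← hP] at hs
        refine List.pairwise_map.mpr ?_
        simpa using hs
    set TT : List (Fin n × Fin n) := P.take m'' with hTT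
    have hTTnodup : TT.Nodup := hPnodup.sublist (List.take_sublist _ _)
    have hTTlen : TT.length = m'' := by
      rw [hTT, List.length_take, hPlen]
      omega
    set TF : Finset (Fin n × Fin n) := TT.toFinset with hTF
    have hTFcard : TF.card = m'' := by
      rw [hTF, List.toFinset_card_of_nodup hTTnodup, hTTlen]
    have hTFsum : ∑ p ∈ TF, f p = ∑ k ∈ Finset.range m'', G.getD k 0 := by
      rw [hTF, List.sum_toFinset f hTTnodup, hTT, List.map_take, hPmapG]
      exact take_sum (by rw [hGlen]; omega)
    -- per-π : few hits implies the hit values are dominated by the top ℓ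
    set N : Equiv.Perm (Fin n) → ℕ := fun π => (TF.filter (fun q => π q.1 = q.2)).card with hN
    have hperπ : ∀ π : Equiv.Perm (Fin n), N π ≤ ℓ →
        ∑ q ∈ TF.filter (fun q => π q.1 = q.2), f q
          ≤ ∑ k ∈ Finset.range ℓ, kmax (fun i => |a i (π i)|) (k + 1) := by
      intro π hNπ
      set x : Fin n → ℝ := fun i => |a i (π i)| with hx
      set s : Finset (Fin n) := (TF.filter (fun q => π q.1 = q.2)).image Prod.fst with hs
      have hscard : s.card ≤ ℓ := le_trans Finset.card_image_le hNπ
      have hinj : ∀ q1 ∈ TF.filter (fun q => π q.1 = q.2),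
          ∀ q2 ∈ TF.filter (fun q => π q.1 = q.2), q1.1 = q2.1 → q1 = q2 := by
        intro q1 h1 q2 h2 h12
        have e1 := (Finset.mem_filter.mp h1).2
        have e2 := (Finset.mem_filter.mp h2).2
        refine Prod.ext h12 ?_
        rw [← e1, ← e2, h12]
      have hsum : ∑ i ∈ s, x i = ∑ q ∈ TF.filter (fun q => π q.1 = q.2), f q := by
        rw [hs, Finset.sum_image hinj]
        refine Finset.sum_congr rfl (fun q hq => ?_)
        have := (Finset.mem_filter.mp hq).2
        rw [hx, hf]
        simp only []
        rw [this]
      have hle := sub_le x (fun i => abs_nonneg _) (perm_ofFn_univ x) s hscard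
      rw [hsum] at hle
      refine le_trans hle ?_
      refine le_of_eq (Finset.sum_congr rfl (fun k _ => ?_))
      exact (hkmax x k).symm
    -- sum over permutations with few hits
    set A : Finset (Equiv.Perm (Fin n)) := Finset.univ.filter (fun π => N π ≤ ℓ) with hA
    have hSA : ∑ π ∈ A, ∑ q ∈ TF.filter (fun q => π q.1 = q.2), f q ≤ S := by
      calc ∑ π ∈ A, ∑ q ∈ TF.filter (fun q => π q.1 = q.2), f q
          ≤ ∑ π ∈ A, ∑ k ∈ Finset.range ℓ, kmax (fun i => |a i (π i)|) (k + 1) := by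
            refine Finset.sum_le_sum (fun π hπ => ?_)
            exact hperπ π (Finset.mem_filter.mp hπ).2
        _ ≤ S := by
            rw [hS]
            refine Finset.sum_le_sum_of_subset_of_nonneg (Finset.filter_subset _ _) ?_
            intro π _ _
            exact ht0 π
    -- swap the double sum
    have hswap2 : ∑ π ∈ A, ∑ q ∈ TF.filter (fun q => π q.1 = q.2), f q
        = ∑ q ∈ TF, f q * ((fiber q.1 q.2).filter (fun π => N π ≤ ℓ)).card := by
      have h1 : ∀ π ∈ A, ∑ q ∈ TF.filter (fun q => π q.1 = q.2), f q
          = ∑ q ∈ TF, if π q.1 = q.2 then f q else 0 :=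
        fun π _ => Finset.sum_filter _ _
      rw [Finset.sum_congr rfl h1, Finset.sum_comm]
      refine Finset.sum_congr rfl (fun q hq => ?_)
      have hAq : A.filter (fun π => π q.1 = q.2)
          = (fiber q.1 q.2).filter (fun π => N π ≤ ℓ) := by
        ext π
        simp only [hA, Finset.mem_filter, Finset.mem_univ, true_and, mem_fiber]
        tauto
      rw [← Finset.sum_filter, hAq, Finset.sum_const, nsmul_eq_mul, mul_comm]
    -- each fiber is at least half good
    have hgood : ∀ q ∈ TF, (c : ℝ) ≤ 2 * ((fiber q.1 q.2).filter (fun π => N π ≤ ℓ)).card := by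
      intro q hq
      have hb : 2 * (TF.card - 1) ≤ ℓ * (n - 1) := by
        rw [hTFcard]
        have h1 : 100 * m'' ≤ m + 99 := by omega
        have h2 : ℓ * n + ℓ * n ≤ 100 * (ℓ * (n - 1)) ∨ n = 1 := by
          rcases Nat.lt_or_ge n 2 with hn2 | hn2
          · right; omega
          · left
            have h3 : 2 * n ≤ 100 * (n - 1) := by omega
            calc ℓ * n + ℓ * n = ℓ * (2 * n) := by ring
              _ ≤ ℓ * (100 * (n - 1)) := Nat.mul_le_mul_left ℓ h3
              _ = 100 * (ℓ * (n - 1)) := by ring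
        rcases h2 with h2 | h2
        · omega
        · -- n = 1, so ℓ = 1, m = 1, m'' = 1
          have hmℓ : m = ℓ := by rw [hm, h2, mul_one]
          omega
      have hcase : 2 ≤ n ∨ TF.card ≤ 1 := by
        rcases Nat.lt_or_ge n 2 with hn2 | hn2
        · right
          rw [hTFcard]
          have hn1 : n = 1 := by omega
          have hmℓ : m = ℓ := by rw [hm, hn1, mul_one]
          omega
        · left; exact hn2
      have := good_half hℓ1 TF hb hcase hq
      rw [hcfib q.1 q.2] at this
      calc (c : ℝ) ≤ ((2 * ((fiber q.1 q.2).filter (fun π => N π ≤ ℓ)).card : ℕ) : ℝ) :=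
            Nat.cast_le.mpr this
        _ = 2 * (((fiber q.1 q.2).filter (fun π => N π ≤ ℓ)).card : ℝ) := by push_cast; ring
    -- assemble
    have hf0 : ∀ q : Fin n × Fin n, 0 ≤ f q := fun q => abs_nonneg _
    have hmain : (c : ℝ) * ∑ q ∈ TF, f q ≤ 2 * S := by
      calc (c : ℝ) * ∑ q ∈ TF, f q = ∑ q ∈ TF, (c : ℝ) * f q := Finset.mul_sum _ _ _
        _ ≤ ∑ q ∈ TF, 2 * (((fiber q.1 q.2).filter (fun π => N π ≤ ℓ)).card : ℝ) * f q := by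
            refine Finset.sum_le_sum (fun q hq => ?_)
            have := hgood q hq
            nlinarith [hf0 q]
        _ = 2 * ∑ q ∈ TF, f q * ((fiber q.1 q.2).filter (fun π => N π ≤ ℓ)).card := by
            rw [Finset.mul_sum]
            refine Finset.sum_congr rfl (fun q _ => ?_)
            ring
        _ ≤ 2 * S := by
            rw [← hswap2]
            have := hSA
            linarith
    -- relate W and the m''-prefix sum
    have hmono := mono_sum hsG h0G hm''m
    rw [← hW] at hmono
    have hW''0 : 0 ≤ ∑ k ∈ Finset.range m'', G.getD k 0 :=
      Finset.sum_nonneg (fun k _ => getD_nonneg h0G k)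
    have h100R : W ≤ 100 * ∑ k ∈ Finset.range m'', G.getD k 0 := by
      have hm''pos : (0:ℝ) < m'' := by positivity
      have h1 : (m'' : ℝ) * W ≤ (m : ℝ) * ∑ k ∈ Finset.range m'', G.getD k 0 := hmono
      have h2 : (m : ℝ) ≤ 100 * m'' := by
        calc (m:ℝ) = ((m : ℕ) : ℝ) := rfl
          _ ≤ ((100 * m'' : ℕ) : ℝ) := Nat.cast_le.mpr h100
          _ = 100 * (m'' : ℝ) := by push_cast; ring
      have h3 : (m : ℝ) * ∑ k ∈ Finset.range m'', G.getD k 0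
          ≤ 100 * (m'' : ℝ) * ∑ k ∈ Finset.range m'', G.getD k 0 :=
        mul_le_mul_of_nonneg_right h2 hW''0
      have h4 : (m'' : ℝ) * W ≤ 100 * (m'' : ℝ) * ∑ k ∈ Finset.range m'', G.getD k 0 :=
        le_trans h1 h3
      have h5 : (m'' : ℝ) * W ≤ (m'' : ℝ) * (100 * ∑ k ∈ Finset.range m'', G.getD k 0) := by
        calc (m'' : ℝ) * W ≤ 100 * (m'' : ℝ) * ∑ k ∈ Finset.range m'', G.getD k 0 := h4
          _ = (m'' : ℝ) * (100 * ∑ k ∈ Finset.range m'', G.getD k 0) := by ring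
      exact le_of_mul_le_mul_left h5 hm''pos
    rw [hTFsum] at hmain
    have hc0 : (0:ℝ) ≤ c := Nat.cast_nonneg c
    have h6 : (c:ℝ) * W ≤ (c:ℝ) * (100 * ∑ k ∈ Finset.range m'', G.getD k 0) :=
      mul_le_mul_of_nonneg_left h100R hc0
    have h7 : (c:ℝ) * (100 * ∑ k ∈ Finset.range m'', G.getD k 0)
        = 100 * ((c:ℝ) * ∑ k ∈ Finset.range m'', G.getD k 0) := by ring
    linarith
  -- ==================== CONCLUDE ====================
  rw [hWsmat]
  constructor
  · rw [le_div_iff₀ hfactpos, hfactR]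
    have hninv : (1 / (n:ℝ)) * (n:ℝ) = 1 := by field_simp
    calc 1 / 800 * (1 / (n:ℝ) * W) * ((n:ℝ) * c) = (c : ℝ) * W / 800 := by
          field_simp
      _ ≤ S := by linarith
  · rw [div_le_iff₀ hfactpos, hfactR]
    calc S ≤ (c:ℝ) * W := upper
      _ ≤ 2 * (1 / (n:ℝ) * W) * ((n:ℝ) * c) := by
          have : 2 * (1 / (n:ℝ) * W) * ((n:ℝ) * c) = 2 * ((c:ℝ) * W) := by
            field_simp
          rw [this]
          have hc0' : (0:ℝ) ≤ (c:ℝ) := Nat.cast_nonneg c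
          nlinarith [mul_nonneg hc0' hW0]
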